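/- Let N_r, N_d ≥ 1 be integers, Ω_sr, Ω_sd, Ω_sp > 0, and set ξ_{k,j} = k/Ω_sr + j/Ω_sd. Let δ_sr be the maximum of N_r i.i.d. exponentials with mean Ω_sr, δ_sd the maximum of N_d i.i.d. exponentials with mean Ω_sd, and λ_sp an exponential with mean Ω_sp, all mutually independent, and set 𝒳 = min{δ_sr, δ_sd}/λ_sp. Then for every Θ₁ > 0, P(𝒳 < Θ₁) = Σ_{k=1}^{N_r} Σ_{j=1}^{N_d} (−1)^{k+j} C(N_r,k) C(N_d,j) · ξ_{k,j}Ω_sp Θ₁/(1 + ξ_{k,j}Ω_sp Θ₁). -/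

import Mathlib

open MeasureTheory Set ProbabilityTheory Real

namespace OutageAux
lemma expMeasure_apply {r : ℝ} {s : Set ℝ} (hs : MeasurableSet s) :
    expMeasure r s = ∫⁻ x in s, exponentialPDF r x := withDensity_apply _ hs

lemma expMeasure_Iic_zero {r : ℝ} (hr : 0 < r) : expMeasure r (Iic 0) = 0 := by
  rw [expMeasure_apply measurableSet_Iic, lintegral_exponentialPDF_eq_antiDeriv hr]; simp

lemma expMeasure_Iio {r : ℝ} (hr : 0 < r) {t : ℝ} (ht : 0 ≤ t) :
    expMeasure r (Iio t) = ENNReal.ofReal (1 - Real.exp (-(r * t))) := by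
  have h2 : expMeasure r {t} = 0 := by
    rw [expMeasure_apply (measurableSet_singleton t)]
    rw [setLIntegral_measure_zero _ _ (measure_singleton t)]
  have h3 : expMeasure r (Iic t) = expMeasure r (Iio t) + expMeasure r {t} := by
    rw [← measure_union (by simp) (measurableSet_singleton t), Iio_union_right]
  rw [h2, add_zero] at h3
  rw [← h3, expMeasure_apply measurableSet_Iic,
    lintegral_exponentialPDF_eq_antiDeriv hr, if_pos ht]

lemma exp_mem {r t : ℝ} (hr : 0 < r) (ht : 0 ≤ t) :
    0 ≤ 1 - Real.exp (-(r * t)) ∧ 1 - Real.exp (-(r * t)) ≤ 1 := by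
  constructor
  · have : Real.exp (-(r*t)) ≤ 1 := Real.exp_le_one_iff.mpr (by nlinarith)
    linarith
  · have := Real.exp_pos (-(r*t)); linarith

lemma factor_mem {r t : ℝ} (N : ℕ) (hr : 0 < r) (ht : 0 ≤ t) :
    0 ≤ 1 - (1 - Real.exp (-(r*t)))^N ∧ 1 - (1 - Real.exp (-(r*t)))^N ≤ 1 := by
  obtain ⟨h1, h2⟩ := exp_mem hr ht
  constructor
  · have := pow_le_one₀ h1 h2 (n := N); linarith
  · have := pow_nonneg h1 N; linarith

lemma measurable_fin_sup {n : ℕ} [NeZero n] {α : Type*} [MeasurableSpace α]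
    {g : Fin n → α → ℝ} (hg : ∀ i, Measurable (g i)) :
    Measurable (fun a => ⨆ i, g i a) := by
  have h : (fun a => ⨆ i, g i a) = Finset.univ.sup' Finset.univ_nonempty g := by
    funext a; rw [Finset.sup'_apply, Finset.sup'_univ_eq_ciSup]
  rw [h]; exact Finset.measurable_sup' _ (fun i _ => hg i)

lemma fin_sup_lt_iff {n : ℕ} [NeZero n] {x : Fin n → ℝ} {t : ℝ} :
    (⨆ i, x i) < t ↔ ∀ i, x i < t := by
  rw [← Finset.sup'_univ_eq_ciSup, Finset.sup'_lt_iff]; simp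

lemma one_sub_pow (x : ℝ) (N : ℕ) :
    1 - (1 - x)^N = ∑ k ∈ Finset.Icc 1 N, (-1:ℝ)^(k+1) * (N.choose k) * x^k := by
  have hins : Finset.range (N+1) = insert 0 (Finset.Icc 1 N) := by
    ext m; simp [Nat.lt_succ_iff]; omega
  have h := add_pow (-x) 1 N
  rw [show (-x + 1 : ℝ) = 1 - x by ring, hins, Finset.sum_insert (by simp)] at h
  simp only [pow_zero, one_pow, mul_one, Nat.choose_zero_right, Nat.cast_one, one_mul] at h
  rw [h]
  rw [show ∀ s : ℝ, 1 - (1 + s) = -s from fun s => by ring, ← Finset.sum_neg_distrib]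
  refine Finset.sum_congr rfl fun k hk => ?_
  rw [neg_pow x k, pow_succ]; ring

lemma alt_sum {N : ℕ} (hN : 1 ≤ N) :
    ∑ k ∈ Finset.Icc 1 N, (-1:ℝ)^(k+1) * (N.choose k) = 1 := by
  have h := one_sub_pow 1 N
  simp only [sub_self, zero_pow (by omega : N ≠ 0), sub_zero, one_pow, mul_one] at h
  exact h.symm

lemma integral_exp_neg_mul {c : ℝ} (hc : 0 < c) :
    ∫ z in Ioi (0:ℝ), Real.exp (-(c * z)) = 1 / c := by
  have h := integral_comp_mul_left_Ioi (fun x => Real.exp (-x)) 0 hc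
  simp only [mul_zero, integral_exp_neg_Ioi_zero, smul_eq_mul, mul_one] at h
  rw [h, one_div]

lemma main_integral (Nr Nd : ℕ) (hNr : 1 ≤ Nr) (hNd : 1 ≤ Nd) {a b r Θ : ℝ}
    (ha : 0 < a) (hb : 0 < b) (hr : 0 < r) (hΘ : 0 < Θ) :
    ∫ z in Ioi (0:ℝ), r * Real.exp (-(r*z)) *
      (1 - (1 - (1 - Real.exp (-(a * (Θ*z))))^Nr) * (1 - (1 - Real.exp (-(b*(Θ*z))))^Nd))
    = ∑ k ∈ Finset.Icc 1 Nr, ∑ j ∈ Finset.Icc 1 Nd,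
        (-1:ℝ)^(k+j) * (Nr.choose k) * (Nd.choose j) *
          (((k*a+j*b) * Θ) / (r + (k*a+j*b)*Θ)) := by
  have hcd : ∀ k j : ℕ, k ∈ Finset.Icc 1 Nr → j ∈ Finset.Icc 1 Nd →
      0 < ((k:ℝ)*a+(j:ℝ)*b) := by
    intro k j hk hj
    simp only [Finset.mem_Icc] at hk hj
    have hk1 : (1:ℝ) ≤ (k:ℝ) := by exact_mod_cast hk.1
    have hj1 : (1:ℝ) ≤ (j:ℝ) := by exact_mod_cast hj.1
    nlinarith
  have hpt : ∀ z : ℝ, r * Real.exp (-(r*z)) *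
      (1 - (1 - (1 - Real.exp (-(a * (Θ*z))))^Nr) * (1 - (1 - Real.exp (-(b*(Θ*z))))^Nd))
      = r * Real.exp (-(r*z)) - ∑ k ∈ Finset.Icc 1 Nr, ∑ j ∈ Finset.Icc 1 Nd,
          ((-1:ℝ)^(k+j) * (Nr.choose k) * (Nd.choose j) * r) *
            Real.exp (-((((k:ℝ)*a+(j:ℝ)*b)*Θ + r) * z)) := by
    intro z
    rw [one_sub_pow (Real.exp (-(a * (Θ*z)))) Nr, one_sub_pow (Real.exp (-(b*(Θ*z)))) Nd,
      Finset.sum_mul_sum, mul_sub, mul_one]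
    congr 1
    rw [Finset.mul_sum]
    refine Finset.sum_congr rfl fun k hk => ?_
    rw [Finset.mul_sum]
    refine Finset.sum_congr rfl fun j hj => ?_
    rw [← Real.exp_nat_mul, ← Real.exp_nat_mul,
      show -(((((k:ℝ)*a+(j:ℝ)*b)*Θ + r)) * z)
        = (k:ℝ) * -(a * (Θ * z)) + ((j:ℝ) * -(b * (Θ * z)) + -(r*z)) by ring,
      Real.exp_add, Real.exp_add]
    ring
  have hterm : ∀ (C c : ℝ), 0 < c →
      IntegrableOn (fun z => C * Real.exp (-(c * z))) (Ioi (0:ℝ)) := by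
    intro C c hc
    simpa [neg_mul, IntegrableOn] using (exp_neg_integrableOn_Ioi 0 hc).const_mul C
  have hint1 : IntegrableOn (fun z => r * Real.exp (-(r*z))) (Ioi (0:ℝ)) :=
    hterm r r hr
  have hintkj : ∀ k ∈ Finset.Icc 1 Nr, ∀ j ∈ Finset.Icc 1 Nd,
      IntegrableOn (fun z => ((-1:ℝ)^(k+j) * (Nr.choose k) * (Nd.choose j) * r) *
        Real.exp (-((((k:ℝ)*a+(j:ℝ)*b)*Θ + r) * z))) (Ioi (0:ℝ)) := by
    intro k hk j hj
    exact hterm _ _ (by nlinarith [hcd k j hk hj])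
  have hintsum : IntegrableOn (fun z => ∑ k ∈ Finset.Icc 1 Nr, ∑ j ∈ Finset.Icc 1 Nd,
      ((-1:ℝ)^(k+j) * (Nr.choose k) * (Nd.choose j) * r) *
        Real.exp (-((((k:ℝ)*a+(j:ℝ)*b)*Θ + r) * z))) (Ioi (0:ℝ)) := by
    apply integrable_finset_sum
    intro k hk
    exact integrable_finset_sum _ (fun j hj => hintkj k hk j hj)
  simp_rw [hpt]
  rw [integral_sub hint1 hintsum]
  rw [integral_finset_sum _ (fun k hk => integrable_finset_sum _ (fun j hj => hintkj k hk j hj))]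
  rw [Finset.sum_congr rfl (fun k hk => integral_finset_sum _ (fun j hj => hintkj k hk j hj))]
  have hval : ∀ k ∈ Finset.Icc 1 Nr, ∀ j ∈ Finset.Icc 1 Nd,
      (∫ z in Ioi (0:ℝ), ((-1:ℝ)^(k+j) * (Nr.choose k) * (Nd.choose j) * r) *
        Real.exp (-((((k:ℝ)*a+(j:ℝ)*b)*Θ + r) * z)))
      = ((-1:ℝ)^(k+j) * (Nr.choose k) * (Nd.choose j) * r) *
          (1 / ((((k:ℝ)*a+(j:ℝ)*b)*Θ + r))) := by
    intro k hk j hj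
    rw [integral_const_mul, integral_exp_neg_mul (by nlinarith [hcd k j hk hj])]
  rw [Finset.sum_congr rfl (fun k hk => Finset.sum_congr rfl (fun j hj => hval k hk j hj))]
  have hintr : ∫ z in Ioi (0:ℝ), r * Real.exp (-(r*z)) = 1 := by
    rw [integral_const_mul, integral_exp_neg_mul hr]; field_simp
  rw [hintr]
  have hone : (1:ℝ) = ∑ k ∈ Finset.Icc 1 Nr, ∑ j ∈ Finset.Icc 1 Nd,
      (-1:ℝ)^(k+j) * (Nr.choose k) * (Nd.choose j) := by
    have h1 : (1:ℝ) = (∑ k ∈ Finset.Icc 1 Nr, (-1:ℝ)^(k+1) * (Nr.choose k)) *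
        (∑ j ∈ Finset.Icc 1 Nd, (-1:ℝ)^(j+1) * (Nd.choose j)) := by
      rw [alt_sum hNr, alt_sum hNd, one_mul]
    conv_lhs => rw [h1]
    rw [Finset.sum_mul_sum]
    exact Finset.sum_congr rfl fun k _ => Finset.sum_congr rfl fun j _ => by ring
  nth_rewrite 1 [hone]
  rw [← Finset.sum_sub_distrib]
  refine Finset.sum_congr rfl fun k hk => ?_
  rw [← Finset.sum_sub_distrib]
  refine Finset.sum_congr rfl fun j hj => ?_
  have hc := hcd k j hk hj
  have h1 : 0 < ((k:ℝ)*a+(j:ℝ)*b)*Θ + r := by nlinarith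
  have h2 : 0 < r + ((k:ℝ)*a+(j:ℝ)*b)*Θ := by nlinarith
  field_simp
  ring

end OutageAux

open OutageAux

/-- Outage probability of symbol `s₁` with selection combining:
`P(𝒳 < Θ₁) = Σ_k Σ_j (−1)^{k+j} C(N_r,k)C(N_d,j) ξ_{k,j}Ω_sp Θ₁/(1+ξ_{k,j}Ω_sp Θ₁)`. -/
theorem outage_s1_selection_combining
    {Ω : Type*} [MeasurableSpace Ω] (P : Measure Ω) [IsProbabilityMeasure P]
    (Nr Nd : ℕ) (hNr : 1 ≤ Nr) (hNd : 1 ≤ Nd)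
    (Ωsr Ωsd Ωsp : ℝ) (hΩsr : 0 < Ωsr) (hΩsd : 0 < Ωsd) (hΩsp : 0 < Ωsp)
    (ξ : ℕ → ℕ → ℝ) (hξ : ∀ k j, ξ k j = (k : ℝ) / Ωsr + (j : ℝ) / Ωsd)
    (X : Fin Nr → Ω → ℝ) (Y : Fin Nd → Ω → ℝ) (Z : Ω → ℝ)
    (hX : ∀ i, Measurable (X i)) (hY : ∀ j, Measurable (Y j)) (hZ : Measurable Z)
    (hInd : iIndepFun
      (Sum.elim (Sum.elim X Y) (fun _ : Unit => Z)) P)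
    (hXlaw : ∀ i, P.map (X i) = expMeasure (1 / Ωsr))
    (hYlaw : ∀ j, P.map (Y j) = expMeasure (1 / Ωsd))
    (hZlaw : P.map Z = expMeasure (1 / Ωsp)) :
    ∀ Θ₁ : ℝ, 0 < Θ₁ →
      P {ω | min (⨆ i, X i ω) (⨆ j, Y j ω) / Z ω < Θ₁}
        = ENNReal.ofReal
            (∑ k ∈ Finset.Icc 1 Nr, ∑ j ∈ Finset.Icc 1 Nd,
              (-1 : ℝ) ^ (k + j) * (Nr.choose k : ℝ) * (Nd.choose j : ℝ) *
                (ξ k j * Ωsp * Θ₁ / (1 + ξ k j * Ωsp * Θ₁))) := by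
  classical
  intro Θ hΘ
  haveI : NeZero Nr := ⟨by omega⟩
  haveI : NeZero Nd := ⟨by omega⟩
  have har : (0:ℝ) < 1/Ωsr := by positivity
  have had : (0:ℝ) < 1/Ωsd := by positivity
  have hap : (0:ℝ) < 1/Ωsp := by positivity
  set f : (Fin Nr ⊕ Fin Nd) ⊕ Unit → Ω → ℝ :=
    Sum.elim (Sum.elim X Y) (fun _ : Unit => Z) with hf_def
  have hf : ∀ i, Measurable (f i) := by
    rintro ((i|j)|u)
    · exact hX i
    · exact hY j
    · exact hZ
  set S : Ω → ℝ := fun ω => ⨆ i, X i ω with hS_def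
  set T : Ω → ℝ := fun ω => ⨆ j, Y j ω with hT_def
  have hS : Measurable S := measurable_fin_sup hX
  have hT : Measurable T := measurable_fin_sup hY
  have hW : Measurable (fun ω => min (S ω) (T ω)) := hS.min hT
  -- independence of min(S,T) and Z
  have hWZ : IndepFun (fun ω => min (S ω) (T ω)) Z P := by
    set FST : Finset ((Fin Nr ⊕ Fin Nd) ⊕ Unit) :=
      Finset.univ.image (fun u : Fin Nr ⊕ Fin Nd => Sum.inl u) with hFST
    set FZ : Finset ((Fin Nr ⊕ Fin Nd) ⊕ Unit) := {Sum.inr ()} with hFZ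
    have hdisj : Disjoint FST FZ := by
      simp [hFST, hFZ, Finset.disjoint_left]
    have hpair := hInd.indepFun_finset FST FZ hdisj hf
    have hmem1 : ∀ u : Fin Nr ⊕ Fin Nd, (Sum.inl u) ∈ FST :=
      fun u => Finset.mem_image_of_mem _ (Finset.mem_univ u)
    have hmemZ : (Sum.inr () : (Fin Nr ⊕ Fin Nd) ⊕ Unit) ∈ FZ := Finset.mem_singleton_self _
    set g1 : ({x // x ∈ FST} → ℝ) → ℝ := fun v =>
      min (⨆ i : Fin Nr, v ⟨Sum.inl (Sum.inl i), hmem1 _⟩)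
          (⨆ j : Fin Nd, v ⟨Sum.inl (Sum.inr j), hmem1 _⟩) with hg1_def
    set g2 : ({x // x ∈ FZ} → ℝ) → ℝ := fun v => v ⟨Sum.inr (), hmemZ⟩ with hg2_def
    have hg1 : Measurable g1 := by
      apply Measurable.min
      · exact measurable_fin_sup (fun i => measurable_pi_apply _)
      · exact measurable_fin_sup (fun j => measurable_pi_apply _)
    have hg2 : Measurable g2 := measurable_pi_apply _
    exact hpair.comp hg1 hg2
  -- independence of S and T
  have hST : IndepFun S T P := by
    set FS : Finset ((Fin Nr ⊕ Fin Nd) ⊕ Unit) :=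
      Finset.univ.image (fun i : Fin Nr => Sum.inl (Sum.inl i)) with hFS
    set FT : Finset ((Fin Nr ⊕ Fin Nd) ⊕ Unit) :=
      Finset.univ.image (fun j : Fin Nd => Sum.inl (Sum.inr j)) with hFT
    have hdisj : Disjoint FS FT := by
      simp [hFS, hFT, Finset.disjoint_left]
    have hpair := hInd.indepFun_finset FS FT hdisj hf
    have hmemS : ∀ i : Fin Nr, (Sum.inl (Sum.inl i)) ∈ FS :=
      fun i => Finset.mem_image_of_mem _ (Finset.mem_univ i)
    have hmemT : ∀ j : Fin Nd, (Sum.inl (Sum.inr j)) ∈ FT :=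
      fun j => Finset.mem_image_of_mem _ (Finset.mem_univ j)
    set g1 : ({x // x ∈ FS} → ℝ) → ℝ := fun v =>
      ⨆ i : Fin Nr, v ⟨Sum.inl (Sum.inl i), hmemS _⟩ with hg1_def
    set g2 : ({x // x ∈ FT} → ℝ) → ℝ := fun v =>
      ⨆ j : Fin Nd, v ⟨Sum.inl (Sum.inr j), hmemT _⟩ with hg2_def
    have hg1 : Measurable g1 := measurable_fin_sup (fun i => measurable_pi_apply _)
    have hg2 : Measurable g2 := measurable_fin_sup (fun j => measurable_pi_apply _)
    exact hpair.comp hg1 hg2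
  -- CDF of S and T
  have hScdf : ∀ t : ℝ, P {ω | S ω < t} = (expMeasure (1/Ωsr) (Iio t))^Nr := by
    intro t
    set FS : Finset ((Fin Nr ⊕ Fin Nd) ⊕ Unit) :=
      Finset.univ.image (fun i : Fin Nr => Sum.inl (Sum.inl i)) with hFS
    have hinj : Function.Injective (fun i : Fin Nr =>
        (Sum.inl (Sum.inl i) : (Fin Nr ⊕ Fin Nd) ⊕ Unit)) := by
      intro i j h; simpa using h
    have h1 : {ω | S ω < t} = ⋂ x ∈ (FS : Set ((Fin Nr ⊕ Fin Nd) ⊕ Unit)), f x ⁻¹' (Iio t) := by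
      ext ω
      simp only [mem_setOf_eq, hS_def, fin_sup_lt_iff, hFS, Finset.coe_image, Finset.coe_univ,
        image_univ, mem_iInter, mem_range, iInter_exists, mem_preimage, mem_Iio,
        forall_exists_index]
      constructor
      · rintro h x i rfl; exact h i
      · intro h i; exact h _ i rfl
    have h2 := hInd.measure_inter_preimage_eq_mul FS (sets := fun _ => Iio t)
      (fun _ _ => measurableSet_Iio)
    rw [h1]
    have h3 : ⋂ x ∈ (FS : Set ((Fin Nr ⊕ Fin Nd) ⊕ Unit)), f x ⁻¹' (Iio t)
        = ⋂ x ∈ FS, f x ⁻¹' (Iio t) := by rfl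
    rw [h3, h2, hFS, Finset.prod_image (fun i _ j _ h => hinj h)]
    have h4 : ∀ i : Fin Nr, P (f (Sum.inl (Sum.inl i)) ⁻¹' Iio t) = expMeasure (1/Ωsr) (Iio t) := by
      intro i
      have heq : f (Sum.inl (Sum.inl i)) = X i := rfl
      rw [heq, ← Measure.map_apply (hX i) measurableSet_Iio, hXlaw i]
    rw [Finset.prod_congr rfl (fun i _ => h4 i), Finset.prod_const, Finset.card_univ,
      Fintype.card_fin]
  have hTcdf : ∀ t : ℝ, P {ω | T ω < t} = (expMeasure (1/Ωsd) (Iio t))^Nd := by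
    intro t
    set FT : Finset ((Fin Nr ⊕ Fin Nd) ⊕ Unit) :=
      Finset.univ.image (fun j : Fin Nd => Sum.inl (Sum.inr j)) with hFT
    have hinj : Function.Injective (fun j : Fin Nd =>
        (Sum.inl (Sum.inr j) : (Fin Nr ⊕ Fin Nd) ⊕ Unit)) := by
      intro i j h; simpa using h
    have h1 : {ω | T ω < t} = ⋂ x ∈ (FT : Set ((Fin Nr ⊕ Fin Nd) ⊕ Unit)), f x ⁻¹' (Iio t) := by
      ext ω
      simp only [mem_setOf_eq, hT_def, fin_sup_lt_iff, hFT, Finset.coe_image, Finset.coe_univ,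
        image_univ, mem_iInter, mem_range, iInter_exists, mem_preimage, mem_Iio,
        forall_exists_index]
      constructor
      · rintro h x j rfl; exact h j
      · intro h j; exact h _ j rfl
    have h2 := hInd.measure_inter_preimage_eq_mul FT (sets := fun _ => Iio t)
      (fun _ _ => measurableSet_Iio)
    rw [h1]
    have h3 : ⋂ x ∈ (FT : Set ((Fin Nr ⊕ Fin Nd) ⊕ Unit)), f x ⁻¹' (Iio t)
        = ⋂ x ∈ FT, f x ⁻¹' (Iio t) := by rfl
    rw [h3, h2, hFT, Finset.prod_image (fun i _ j _ h => hinj h)]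
    have h4 : ∀ j : Fin Nd, P (f (Sum.inl (Sum.inr j)) ⁻¹' Iio t) = expMeasure (1/Ωsd) (Iio t) := by
      intro j
      have heq : f (Sum.inl (Sum.inr j)) = Y j := rfl
      rw [heq, ← Measure.map_apply (hY j) measurableSet_Iio, hYlaw j]
    rw [Finset.prod_congr rfl (fun j _ => h4 j), Finset.prod_const, Finset.card_univ,
      Fintype.card_fin]
  -- CDF of W := min S T
  have hWcdf : ∀ t : ℝ, P {ω | min (S ω) (T ω) < t}
      = 1 - (1 - (expMeasure (1/Ωsr) (Iio t))^Nr) * (1 - (expMeasure (1/Ωsd) (Iio t))^Nd) := by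
    intro t
    have h1 : {ω | min (S ω) (T ω) < t} = (S ⁻¹' (Ici t) ∩ T ⁻¹' (Ici t))ᶜ := by
      ext ω
      simp only [mem_setOf_eq, mem_compl_iff, mem_inter_iff, mem_preimage, mem_Ici,
        min_lt_iff, not_and_or, not_le]
    rw [h1, prob_compl_eq_one_sub ((hS measurableSet_Ici).inter (hT measurableSet_Ici)),
      (indepFun_iff_measure_inter_preimage_eq_mul.mp hST) (Ici t) (Ici t)
        measurableSet_Ici measurableSet_Ici]
    have hSi : P (S ⁻¹' Ici t) = 1 - (expMeasure (1/Ωsr) (Iio t))^Nr := by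
      have h2 : S ⁻¹' Ici t = (S ⁻¹' Iio t)ᶜ := by ext ω; simp [not_lt]
      have h5 : P (S ⁻¹' Iio t) = (expMeasure (1/Ωsr) (Iio t))^Nr := hScdf t
      rw [h2, prob_compl_eq_one_sub (hS measurableSet_Iio), h5]
    have hTi : P (T ⁻¹' Ici t) = 1 - (expMeasure (1/Ωsd) (Iio t))^Nd := by
      have h2 : T ⁻¹' Ici t = (T ⁻¹' Iio t)ᶜ := by ext ω; simp [not_lt]
      have h5 : P (T ⁻¹' Iio t) = (expMeasure (1/Ωsd) (Iio t))^Nd := hTcdf t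
      rw [h2, prob_compl_eq_one_sub (hT measurableSet_Iio), h5]
    rw [hSi, hTi]
  -- real version for t ≥ 0
  set G : ℝ → ℝ := fun t => 1 - (1 - (1 - Real.exp (-(1/Ωsr * t)))^Nr) *
      (1 - (1 - Real.exp (-(1/Ωsd * t)))^Nd) with hG_def
  have hWreal : ∀ t : ℝ, 0 ≤ t →
      P {ω | min (S ω) (T ω) < t} = ENNReal.ofReal (G t) := by
    intro t ht
    obtain ⟨he1r, he2r⟩ := exp_mem har ht
    obtain ⟨he1d, he2d⟩ := exp_mem had ht
    obtain ⟨hf1r, hf2r⟩ := factor_mem Nr har ht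
    obtain ⟨hf1d, hf2d⟩ := factor_mem Nd had ht
    rw [hWcdf t, expMeasure_Iio har ht, expMeasure_Iio had ht,
      ← ENNReal.ofReal_pow he1r, ← ENNReal.ofReal_pow he1d, ← ENNReal.ofReal_one,
      ← ENNReal.ofReal_sub _ (pow_nonneg he1r _), ← ENNReal.ofReal_sub _ (pow_nonneg he1d _),
      ← ENNReal.ofReal_mul hf1r, ← ENNReal.ofReal_sub _ (mul_nonneg hf1r hf1d)]
  -- reduce to a product measure and Fubini
  haveI hPM : IsProbabilityMeasure (expMeasure (1/Ωsp)) :=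
    isProbabilityMeasure_expMeasure hap
  haveI : IsProbabilityMeasure (P.map (fun ω => min (S ω) (T ω))) :=
    Measure.isProbabilityMeasure_map hW.aemeasurable
  have key : P {ω | min (⨆ i, X i ω) (⨆ j, Y j ω) / Z ω < Θ}
      = ∫⁻ z in Ioi 0, ENNReal.ofReal (G (Θ * z)) ∂(expMeasure (1/Ωsp)) := by
    have hD : MeasurableSet {p : ℝ × ℝ | p.1 / p.2 < Θ} :=
      measurableSet_lt (measurable_fst.div measurable_snd) measurable_const
    have hmap : P {ω | min (⨆ i, X i ω) (⨆ j, Y j ω) / Z ω < Θ}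
        = ((P.map (fun ω => min (S ω) (T ω))).prod (expMeasure (1/Ωsp)))
            {p : ℝ × ℝ | p.1/p.2 < Θ} := by
      rw [← hZlaw,
        ← (indepFun_iff_map_prod_eq_prod_map_map hW.aemeasurable hZ.aemeasurable).mp hWZ,
        Measure.map_apply (hW.prodMk hZ) hD]
      rfl
    have hae : ∀ᵐ z ∂(expMeasure (1/Ωsp)), z ∈ Ioi (0:ℝ) := by
      rw [ae_iff]
      have hc : {z : ℝ | ¬ z ∈ Ioi 0} = Iic 0 := by ext z; simp
      rw [hc]
      exact expMeasure_Iic_zero hap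
    rw [hmap, Measure.prod_apply_symm hD]
    have hres : ∫⁻ z, (P.map (fun ω => min (S ω) (T ω)))
          ((fun w => (w, z)) ⁻¹' {p : ℝ × ℝ | p.1/p.2 < Θ}) ∂(expMeasure (1/Ωsp))
        = ∫⁻ z in Ioi 0, (P.map (fun ω => min (S ω) (T ω)))
          ((fun w => (w, z)) ⁻¹' {p : ℝ × ℝ | p.1/p.2 < Θ}) ∂(expMeasure (1/Ωsp)) := by
      conv_lhs => rw [← Measure.restrict_eq_self_of_ae_mem hae]
    rw [hres]
    refine setLIntegral_congr_fun measurableSet_Ioi (fun z hz => ?_)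
    have hzpos : (0:ℝ) < z := hz
    have hpre : (fun w => (w, z)) ⁻¹' {p : ℝ × ℝ | p.1/p.2 < Θ} = Iio (Θ * z) := by
      ext w
      simp only [mem_preimage, mem_setOf_eq, mem_Iio]
      rw [div_lt_iff₀ hzpos]
    rw [hpre, Measure.map_apply hW measurableSet_Iio]
    exact hWreal _ (by positivity)
  -- compute the lintegral
  have final : ∫⁻ z in Ioi 0, ENNReal.ofReal (G (Θ * z)) ∂(expMeasure (1/Ωsp))
      = ENNReal.ofReal
            (∑ k ∈ Finset.Icc 1 Nr, ∑ j ∈ Finset.Icc 1 Nd,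
              (-1 : ℝ) ^ (k + j) * (Nr.choose k : ℝ) * (Nd.choose j : ℝ) *
                (ξ k j * Ωsp * Θ / (1 + ξ k j * Ωsp * Θ))) := by
    have hGbd : ∀ t : ℝ, 0 ≤ t → 0 ≤ G t ∧ G t ≤ 1 := by
      intro t ht
      obtain ⟨hf1r, hf2r⟩ := factor_mem Nr har ht
      obtain ⟨hf1d, hf2d⟩ := factor_mem Nd had ht
      have hGt : G t = 1 - (1 - (1 - Real.exp (-(1/Ωsr * t)))^Nr) *
          (1 - (1 - Real.exp (-(1/Ωsd * t)))^Nd) := rfl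
      rw [hGt]
      constructor <;> nlinarith
    have hGcont : Continuous G := by
      rw [hG_def]; fun_prop
    have hGmeas : Measurable (fun z : ℝ => ENNReal.ofReal (G (Θ * z))) := by
      apply Measurable.ennreal_ofReal
      exact (hGcont.comp (continuous_const.mul continuous_id)).measurable
    have hpdfmeas : Measurable (exponentialPDF (1/Ωsp)) :=
      (measurable_exponentialPDFReal _).ennreal_ofReal
    have hint1 : IntegrableOn (fun z => (1/Ωsp) * Real.exp (-(1/Ωsp * z))) (Ioi (0:ℝ)) := by
      simpa [neg_mul, IntegrableOn] using (exp_neg_integrableOn_Ioi 0 hap).const_mul (1/Ωsp)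
    have hcont : Continuous (fun z => (1/Ωsp) * Real.exp (-(1/Ωsp * z)) * G (Θ*z)) := by
      fun_prop
    have hint : IntegrableOn (fun z => (1/Ωsp) * Real.exp (-(1/Ωsp * z)) * G (Θ*z)) (Ioi 0) := by
      refine Integrable.mono hint1 hcont.aestronglyMeasurable ?_
      rw [ae_restrict_iff' measurableSet_Ioi]
      refine ae_of_all _ fun z hz => ?_
      have hz0 : (0:ℝ) < z := hz
      obtain ⟨hg0, hg1⟩ := hGbd (Θ*z) (by positivity)
      have hb : (0:ℝ) ≤ (1/Ωsp) * Real.exp (-(1/Ωsp * z)) := by positivity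
      rw [Real.norm_eq_abs, Real.norm_eq_abs, abs_of_nonneg (mul_nonneg hb hg0),
        abs_of_nonneg hb]
      exact mul_le_of_le_one_right hb hg1
    have hnn : 0 ≤ᵐ[volume.restrict (Ioi (0:ℝ))]
        fun z => (1/Ωsp) * Real.exp (-(1/Ωsp * z)) * G (Θ*z) := by
      filter_upwards [ae_restrict_mem measurableSet_Ioi] with z hz
      have hz0 : (0:ℝ) < z := hz
      obtain ⟨hg0, hg1⟩ := hGbd (Θ*z) (by positivity)
      have hb : (0:ℝ) ≤ (1/Ωsp) * Real.exp (-(1/Ωsp * z)) := by positivity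
      simp only [Pi.zero_apply]
      exact mul_nonneg hb hg0
    calc ∫⁻ z in Ioi 0, ENNReal.ofReal (G (Θ * z)) ∂(expMeasure (1/Ωsp))
        = ∫⁻ z in Ioi 0, (exponentialPDF (1/Ωsp) * fun z => ENNReal.ofReal (G (Θ * z))) z := by
          rw [show expMeasure (1/Ωsp) = volume.withDensity (exponentialPDF (1/Ωsp)) from rfl,
            restrict_withDensity measurableSet_Ioi,
            lintegral_withDensity_eq_lintegral_mul _ hpdfmeas hGmeas]
      _ = ∫⁻ z in Ioi 0, ENNReal.ofReal ((1/Ωsp) * Real.exp (-(1/Ωsp * z)) * G (Θ*z)) := by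
          refine setLIntegral_congr_fun measurableSet_Ioi (fun z hz => ?_)
          have hz0 : (0:ℝ) < z := hz
          simp only [Pi.mul_apply]
          rw [exponentialPDF_of_nonneg hz0.le, ← ENNReal.ofReal_mul (by positivity)]
      _ = ENNReal.ofReal (∫ z in Ioi 0, (1/Ωsp) * Real.exp (-(1/Ωsp * z)) * G (Θ*z)) :=
          (ofReal_integral_eq_lintegral_ofReal hint hnn).symm
      _ = ENNReal.ofReal
            (∑ k ∈ Finset.Icc 1 Nr, ∑ j ∈ Finset.Icc 1 Nd,
              (-1 : ℝ) ^ (k + j) * (Nr.choose k : ℝ) * (Nd.choose j : ℝ) *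
                (ξ k j * Ωsp * Θ / (1 + ξ k j * Ωsp * Θ))) := by
          simp only [hG_def]
          rw [main_integral Nr Nd hNr hNd har had hap hΘ]
          refine congrArg ENNReal.ofReal ?_
          refine Finset.sum_congr rfl fun k hk => Finset.sum_congr rfl fun j hj => ?_
          simp only [Finset.mem_Icc] at hk hj
          have hk1 : (1:ℝ) ≤ (k:ℝ) := by exact_mod_cast hk.1
          have hj1 : (1:ℝ) ≤ (j:ℝ) := by exact_mod_cast hj.1
          rw [hξ k j]
          have hxi : (0:ℝ) < (k:ℝ)/Ωsr + (j:ℝ)/Ωsd := by positivity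
          have hd1 : (0:ℝ) < 1/Ωsp + ((k:ℝ)*(1/Ωsr)+(j:ℝ)*(1/Ωsd))*Θ := by positivity
          have hd2 : (0:ℝ) < 1 + ((k:ℝ)/Ωsr + (j:ℝ)/Ωsd) * Ωsp * Θ := by positivity
          have hfrac : (((k:ℝ)*(1/Ωsr)+(j:ℝ)*(1/Ωsd))*Θ) /
                (1/Ωsp + ((k:ℝ)*(1/Ωsr)+(j:ℝ)*(1/Ωsd))*Θ)
              = ((k:ℝ)/Ωsr + (j:ℝ)/Ωsd) * Ωsp * Θ / (1 + ((k:ℝ)/Ωsr + (j:ℝ)/Ωsd) * Ωsp * Θ) := by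
            rw [div_eq_div_iff hd1.ne' hd2.ne']
            field_simp
          rw [hfrac]
  rw [key, final]
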